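/- Let η ≥ 0, C > 0, d ≥ 0, ρ > 0, t > 0 and a > 0, and let F be a continuous ℂ-valued function on the parabolic arc {(ρ + i k)² : k ∈ [−a,a]} satisfying |F((ρ+ik)²)| ≤ C (ρ² + k²)^{−1/2} e^{−η √(ρ²+k²) · d} for all |k| ≤ a. Then the contour integral of e^{λ t} F(λ) over the arc λ(k) = (ρ+ik)², k ∈ [−a,a], satisfies the bound |(1/(2π)) ∫_{−a}^{a} e^{(ρ+ik)² t} F((ρ+ik)²) · 2(ρ+ik) dk| ≤ (C/√(π t)) e^{ρ² t − ρ η d}. -/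

import Mathlib

/-- Estimate for the inverse Laplace transform along the parabolic arc
`λ(k) = (ρ + ik)²`, `k ∈ [-a, a]`, with `dλ = 2i(ρ + ik) dk` (the factor `i` of `dλ`
being absorbed into the `1/(2πi)` prefactor):
`|(1/2π) ∫ e^{λt} F(λ) dλ| ≤ (C/√(πt)) e^{ρ²t - ρηd}`. -/
theorem parabolic_contour_estimate
    (η C d ρ t a : ℝ) (hη : 0 ≤ η) (hC : 0 < C) (hd : 0 ≤ d) (hρ : 0 < ρ)
    (ht : 0 < t) (ha : 0 < a)
    (F : ℂ → ℂ)
    (hFcont : ContinuousOn (fun k : ℝ => F (((ρ:ℂ) + Complex.I * (k:ℂ)) ^ 2))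
      (Set.Icc (-a) a))
    (hFbd : ∀ k : ℝ, |k| ≤ a →
      ‖F (((ρ:ℂ) + Complex.I * (k:ℂ)) ^ 2)‖ ≤
        C * (ρ ^ 2 + k ^ 2) ^ (-(1:ℝ)/2) * Real.exp (-η * Real.sqrt (ρ ^ 2 + k ^ 2) * d)) :
    ‖(1 / (2 * Real.pi)) •
        ∫ k in (-a)..a,
          Complex.exp ((((ρ:ℂ) + Complex.I * (k:ℂ)) ^ 2) * (t:ℂ)) *
            F (((ρ:ℂ) + Complex.I * (k:ℂ)) ^ 2) * (2 * ((ρ:ℂ) + Complex.I * (k:ℂ)))‖ ≤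
      (C / Real.sqrt (Real.pi * t)) * Real.exp (ρ ^ 2 * t - ρ * η * d) := by
  have hπ : (0:ℝ) < Real.pi := Real.pi_pos
  set E : ℝ := Real.exp (ρ ^ 2 * t - ρ * η * d) with hE
  have hEpos : 0 < E := Real.exp_pos _
  set f : ℝ → ℂ := fun k =>
    Complex.exp ((((ρ:ℂ) + Complex.I * (k:ℂ)) ^ 2) * (t:ℂ)) *
      F (((ρ:ℂ) + Complex.I * (k:ℂ)) ^ 2) * (2 * ((ρ:ℂ) + Complex.I * (k:ℂ))) with hf
  -- pointwise bound on ‖f k‖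
  have key : ∀ k ∈ Set.Icc (-a) a, ‖f k‖ ≤ 2 * C * E * Real.exp (-t * k ^ 2) := by
    intro k hk
    have hka : |k| ≤ a := abs_le.2 ⟨hk.1, hk.2⟩
    have hs : (0:ℝ) < ρ ^ 2 + k ^ 2 := by positivity
    have hsqrt : 0 < Real.sqrt (ρ ^ 2 + k ^ 2) := Real.sqrt_pos.2 hs
    have hρle : ρ ≤ Real.sqrt (ρ ^ 2 + k ^ 2) := by
      rw [show ρ ^ 2 + k ^ 2 = ρ * ρ + k ^ 2 by ring]
      calc ρ = Real.sqrt (ρ * ρ) := (Real.sqrt_mul_self hρ.le).symm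
        _ ≤ _ := Real.sqrt_le_sqrt (by nlinarith)
    -- norm of the exponential factor
    have h1 : ‖Complex.exp ((((ρ:ℂ) + Complex.I * (k:ℂ)) ^ 2) * (t:ℂ))‖ =
        Real.exp ((ρ ^ 2 - k ^ 2) * t) := by
      rw [Complex.norm_exp]
      congr 1
      simp [pow_two, Complex.mul_re, Complex.mul_im, Complex.add_re, Complex.add_im]
      try ring
    -- norm of the 2(ρ+ik) factor
    have h2 : ‖(2 : ℂ) * ((ρ:ℂ) + Complex.I * (k:ℂ))‖ = 2 * Real.sqrt (ρ ^ 2 + k ^ 2) := by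
      rw [norm_mul]
      congr 1
      · simp
      · rw [Complex.norm_def, Complex.normSq_apply]
        congr 1
        simp [Complex.add_re, Complex.add_im, Complex.mul_re, Complex.mul_im]
        ring
    have h3 := hFbd k hka
    have hrpow : (ρ ^ 2 + k ^ 2) ^ (-(1:ℝ)/2) = (Real.sqrt (ρ ^ 2 + k ^ 2))⁻¹ := by
      rw [show (-(1:ℝ)/2) = -(1/2) by ring, Real.rpow_neg hs.le, Real.sqrt_eq_rpow]
    rw [hf]
    simp only
    rw [norm_mul, norm_mul, h1, h2]
    have hstep : Real.exp ((ρ ^ 2 - k ^ 2) * t) *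
        (C * (ρ ^ 2 + k ^ 2) ^ (-(1:ℝ)/2) * Real.exp (-η * Real.sqrt (ρ ^ 2 + k ^ 2) * d)) *
        (2 * Real.sqrt (ρ ^ 2 + k ^ 2)) ≤ 2 * C * E * Real.exp (-t * k ^ 2) := by
      rw [hrpow]
      have hcancel : Real.exp ((ρ ^ 2 - k ^ 2) * t) *
          (C * (Real.sqrt (ρ ^ 2 + k ^ 2))⁻¹ * Real.exp (-η * Real.sqrt (ρ ^ 2 + k ^ 2) * d)) *
          (2 * Real.sqrt (ρ ^ 2 + k ^ 2)) =
          2 * C * (Real.exp ((ρ ^ 2 - k ^ 2) * t) *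
            Real.exp (-η * Real.sqrt (ρ ^ 2 + k ^ 2) * d)) := by
        field_simp
      rw [hcancel, ← Real.exp_add]
      rw [show 2 * C * E * Real.exp (-t * k ^ 2) =
          2 * C * Real.exp ((ρ ^ 2 * t - ρ * η * d) + -t * k ^ 2) by
        rw [Real.exp_add]; ring]
      have hexp : (ρ ^ 2 - k ^ 2) * t + -η * Real.sqrt (ρ ^ 2 + k ^ 2) * d ≤
          ρ ^ 2 * t - ρ * η * d + -t * k ^ 2 := by
        nlinarith [mul_le_mul_of_nonneg_left hρle (mul_nonneg hη hd)]
      have := Real.exp_le_exp.2 hexp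
      nlinarith
    calc Real.exp ((ρ ^ 2 - k ^ 2) * t) * ‖F (((ρ:ℂ) + Complex.I * (k:ℂ)) ^ 2)‖ *
          (2 * Real.sqrt (ρ ^ 2 + k ^ 2)) ≤ _ := by
          apply mul_le_mul_of_nonneg_right (mul_le_mul_of_nonneg_left h3 (Real.exp_pos _).le)
          positivity
      _ ≤ _ := hstep
  -- integrability
  have hcont : ContinuousOn f (Set.Icc (-a) a) := by
    apply ContinuousOn.mul
    apply ContinuousOn.mul
    · exact (Complex.continuous_exp.comp (by fun_prop)).continuousOn
    · exact hFcont
    · exact (by fun_prop : Continuous fun k : ℝ => (2:ℂ) * ((ρ:ℂ) + Complex.I * (k:ℂ))).continuousOn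
  have hab : -a ≤ a := by linarith
  have hint : IntervalIntegrable f MeasureTheory.volume (-a) a := by
    apply ContinuousOn.intervalIntegrable
    rwa [Set.uIcc_of_le hab]
  have hgauss_int : MeasureTheory.Integrable (fun k : ℝ => Real.exp (-t * k ^ 2)) :=
    integrable_exp_neg_mul_sq ht
  -- bound the integral
  have step1 : ‖∫ k in (-a)..a, f k‖ ≤ ∫ k in (-a)..a, 2 * C * E * Real.exp (-t * k ^ 2) := by
    calc ‖∫ k in (-a)..a, f k‖ ≤ ∫ k in (-a)..a, ‖f k‖ :=
        intervalIntegral.norm_integral_le_integral_norm hab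
      _ ≤ _ := by
        apply intervalIntegral.integral_mono_on hab hint.norm
          ((hgauss_int.const_mul _).intervalIntegrable) key
  have step2 : ∫ k in (-a)..a, 2 * C * E * Real.exp (-t * k ^ 2) ≤
      2 * C * E * Real.sqrt (Real.pi / t) := by
    rw [intervalIntegral.integral_const_mul]
    have h1 : (∫ k in (-a)..a, Real.exp (-t * k ^ 2)) ≤ ∫ k : ℝ, Real.exp (-t * k ^ 2) := by
      rw [intervalIntegral.integral_of_le hab]
      exact MeasureTheory.setIntegral_le_integral hgauss_int
        (Filter.Eventually.of_forall fun x => (Real.exp_pos _).le)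
    have h2 : (∫ k : ℝ, Real.exp (-t * k ^ 2)) = Real.sqrt (Real.pi / t) := integral_gaussian t
    calc 2 * C * E * ∫ k in (-a)..a, Real.exp (-t * k ^ 2) ≤
        2 * C * E * ∫ k : ℝ, Real.exp (-t * k ^ 2) := by
          apply mul_le_mul_of_nonneg_left h1; positivity
      _ = _ := by rw [h2]
  -- put it together
  rw [norm_smul]
  have hnorm : ‖(1 / (2 * Real.pi) : ℝ)‖ = 1 / (2 * Real.pi) := by
    rw [Real.norm_eq_abs, abs_of_pos]; positivity
  rw [hnorm]
  have hfinal : 1 / (2 * Real.pi) * (2 * C * E * Real.sqrt (Real.pi / t)) =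
      C / Real.sqrt (Real.pi * t) * E := by
    rw [Real.sqrt_div hπ.le, Real.sqrt_mul hπ.le]
    have hsp : Real.sqrt Real.pi * Real.sqrt Real.pi = Real.pi := Real.mul_self_sqrt hπ.le
    have hspt : (0:ℝ) < Real.sqrt Real.pi := Real.sqrt_pos.2 hπ
    have hst : (0:ℝ) < Real.sqrt t := Real.sqrt_pos.2 ht
    field_simp
    linear_combination hsp
  calc 1 / (2 * Real.pi) * ‖∫ k in (-a)..a, f k‖ ≤
      1 / (2 * Real.pi) * (2 * C * E * Real.sqrt (Real.pi / t)) := by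
        apply mul_le_mul_of_nonneg_left (le_trans step1 step2); positivity
    _ = _ := by rw [hfinal]
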